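/- Let 𝓡 be a compact set of symmetric positive definite k×k real matrices. Then there exist constants C, c > 0 such that for every R ∈ 𝓡, every λ ∈ ℝ^k, and every y ∈ {0,1}^k: ∫_{ℝ^k} ∏_{i=1}^k 1_{I_{y_i}}(x_i + λ_i) · φ_R(x) dx ≥ C·exp(−c·‖λ‖₂²). -/

import Mathlib

open MeasureTheory Real Matrix

/-- The centered Gaussian density on `ℝ^k` with covariance matrix `R`:
`φ_R(x) = ((2π)^k det R)^{-1/2} exp(−(1/2) xᵀ R⁻¹ x)`. -/
noncomputable def gaussDensity {k : ℕ} (R : Matrix (Fin k) (Fin k) ℝ) (x : Fin k → ℝ) : ℝ :=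
  (Real.sqrt ((2 * Real.pi) ^ k * R.det))⁻¹ * Real.exp (-(1 / 2) * (x ⬝ᵥ R⁻¹ *ᵥ x))

/-- The half-line `I_0 = (−∞,0]`, `I_1 = (0,∞)`, indexed by a boolean. -/
noncomputable def halfLine (b : Bool) : Set ℝ := if b then Set.Ioi 0 else Set.Iic 0


theorem quad_lb' {k : ℕ} (A : Matrix (Fin k) (Fin k) ℝ) (hA : A.PosDef) :
    ∃ ε : ℝ, 0 < ε ∧ ∀ x : Fin k → ℝ, ε * (∑ i, x i ^ 2) ≤ x ⬝ᵥ A *ᵥ x := by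
  have hApos : ∀ x : Fin k → ℝ, x ≠ 0 → 0 < x ⬝ᵥ A *ᵥ x := by
    intro x hx
    simpa using hA.dotProduct_mulVec_pos hx
  rcases Nat.eq_zero_or_pos k with hk | hk
  · subst hk
    refine ⟨1, one_pos, fun x => ?_⟩
    simp [dotProduct]
  · set K : Set (Fin k → ℝ) := {x | ∑ i, x i ^ 2 = 1} with hK
    have hKclosed : IsClosed K := by
      have : Continuous fun x : Fin k → ℝ => ∑ i, x i ^ 2 := by continuity
      exact isClosed_eq this continuous_const
    have hKsub : K ⊆ Metric.closedBall 0 1 := by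
      intro x hx
      rw [Metric.mem_closedBall, dist_zero_right]
      rw [pi_norm_le_iff_of_nonneg (by norm_num)]
      intro i
      have h1 : x i ^ 2 ≤ 1 ^ 2 := by
        rw [one_pow, ← hx]
        exact Finset.single_le_sum (fun j _ => sq_nonneg (x j)) (Finset.mem_univ i)
      simpa using abs_le_of_sq_le_sq h1 (by norm_num)
    have hKcomp : IsCompact K :=
      (isCompact_closedBall (0 : Fin k → ℝ) 1).of_isClosed_subset hKclosed hKsub
    have hKne : K.Nonempty := by
      refine ⟨Pi.single ⟨0, hk⟩ 1, ?_⟩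
      simp [hK, Pi.single_apply]
    have hgcont : Continuous fun x : Fin k → ℝ => x ⬝ᵥ A *ᵥ x :=
      continuous_id.dotProduct (continuous_const.matrix_mulVec continuous_id)
    obtain ⟨u, huK, hmin'⟩ := hKcomp.exists_isMinOn hKne hgcont.continuousOn
    have hmin := isMinOn_iff.mp hmin'
    have hune : u ≠ 0 := by
      intro h
      rw [h] at huK
      simp [hK] at huK
    refine ⟨u ⬝ᵥ A *ᵥ u, hApos u hune, fun x => ?_⟩
    by_cases hx : x = 0
    · subst hx; simp [dotProduct]
    · set s : ℝ := ∑ i, x i ^ 2 with hs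
      have hspos : 0 < s := by
        rcases Function.ne_iff.mp hx with ⟨i, hi⟩
        have : 0 < x i ^ 2 := pow_two_pos_of_ne_zero hi
        exact lt_of_lt_of_le this
          (Finset.single_le_sum (fun j _ => sq_nonneg (x j)) (Finset.mem_univ i))
      set v : Fin k → ℝ := (Real.sqrt s)⁻¹ • x with hv
      have hsqrt : Real.sqrt s ^ 2 = s := Real.sq_sqrt hspos.le
      have hsq : (Real.sqrt s)⁻¹ ^ 2 = s⁻¹ := by
        rw [inv_pow, hsqrt]
      have hvK : v ∈ K := by
        simp only [hK, Set.mem_setOf_eq, hv, Pi.smul_apply, smul_eq_mul, mul_pow]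
        rw [← Finset.mul_sum, hsq, ← hs, inv_mul_cancel₀ hspos.ne']
      have hvq : v ⬝ᵥ A *ᵥ v = s⁻¹ * (x ⬝ᵥ A *ᵥ x) := by
        rw [hv, smul_dotProduct, Matrix.mulVec_smul, dotProduct_smul]
        rw [smul_eq_mul, smul_eq_mul, ← mul_assoc, ← sq, hsq]
      have := hmin v hvK
      rw [hvq] at this
      calc (u ⬝ᵥ A *ᵥ u) * s ≤ (s⁻¹ * (x ⬝ᵥ A *ᵥ x)) * s := by
            exact mul_le_mul_of_nonneg_right this hspos.le
        _ = x ⬝ᵥ A *ᵥ x := by field_simp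


theorem gauss_continuous' {k : ℕ} (R : Matrix (Fin k) (Fin k) ℝ) :
    Continuous (gaussDensity R) := by
  unfold gaussDensity
  exact continuous_const.mul (Real.continuous_exp.comp (continuous_const.mul
    (continuous_id.dotProduct (continuous_const.matrix_mulVec continuous_id))))

theorem gauss_integrable' {k : ℕ} (R : Matrix (Fin k) (Fin k) ℝ) (hR : R.PosDef) :
    Integrable (gaussDensity R) := by
  obtain ⟨ε, hε, hq⟩ := quad_lb' R⁻¹ hR.inv
  set N : ℝ := (Real.sqrt ((2 * Real.pi) ^ k * R.det))⁻¹ with hN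
  have hN0 : 0 ≤ N := by positivity
  have hgi : Integrable (fun x : Fin k → ℝ => N * ∏ i, Real.exp (-(ε / 2) * x i ^ 2)) := by
    refine Integrable.const_mul ?_ N
    exact Integrable.fintype_prod (f := fun _ t => Real.exp (-(ε / 2) * t ^ 2))
      (fun i => by simpa [neg_mul] using integrable_exp_neg_mul_sq (by positivity : 0 < ε / 2))
  refine hgi.mono (gauss_continuous' R).aestronglyMeasurable ?_
  refine Filter.Eventually.of_forall fun x => ?_
  have h1 : Real.exp (-(1 / 2) * (x ⬝ᵥ R⁻¹ *ᵥ x)) ≤ ∏ i, Real.exp (-(ε / 2) * x i ^ 2) := by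
    rw [← Real.exp_sum]
    apply Real.exp_le_exp.mpr
    have := hq x
    have hsum : ∑ i, -(ε / 2) * x i ^ 2 = -(1 / 2) * (ε * ∑ i, x i ^ 2) := by
      rw [← Finset.mul_sum]; ring
    rw [hsum]
    nlinarith [hq x]
  have h2 : 0 ≤ Real.exp (-(1 / 2) * (x ⬝ᵥ R⁻¹ *ᵥ x)) := Real.exp_pos _ |>.le
  have h3 : 0 ≤ ∏ i, Real.exp (-(ε / 2) * x i ^ 2) :=
    Finset.prod_nonneg fun i _ => (Real.exp_pos _).le
  rw [Real.norm_eq_abs, Real.norm_eq_abs]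
  show |N * Real.exp (-(1 / 2) * (x ⬝ᵥ R⁻¹ *ᵥ x))| ≤ _
  rw [abs_of_nonneg (mul_nonneg hN0 h2), abs_of_nonneg (mul_nonneg hN0 h3)]
  exact mul_le_mul_of_nonneg_left h1 hN0

/-- For a compact set `𝓡` of symmetric positive definite `k×k` matrices, there are constants
`C, c > 0` such that for every `R ∈ 𝓡`, `λ ∈ ℝ^k` and `y ∈ {0,1}^k`,
`∫_{ℝ^k} ∏_i 1_{I_{y_i}}(x_i + λ_i) φ_R(x) dx ≥ C·exp(−c‖λ‖₂²)`. -/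
theorem stmt7 (k : ℕ) (𝓡 : Set (Matrix (Fin k) (Fin k) ℝ))
    (hcomp : IsCompact 𝓡) (hsymm : ∀ R ∈ 𝓡, R.IsSymm) (hpd : ∀ R ∈ 𝓡, R.PosDef) :
    ∃ C c : ℝ, 0 < C ∧ 0 < c ∧
      ∀ R ∈ 𝓡, ∀ lam : Fin k → ℝ, ∀ y : Fin k → Bool,
        C * Real.exp (-c * ∑ i, lam i ^ 2) ≤
          ∫ x : Fin k → ℝ,
            (∏ i, Set.indicator (halfLine (y i)) (fun _ => (1 : ℝ)) (x i + lam i)) *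
              gaussDensity R x := by
  rcases Set.eq_empty_or_nonempty 𝓡 with hemp | hne
  · exact ⟨1, 1, one_pos, one_pos, by simp [hemp]⟩
  -- continuity of R ↦ ∑ᵢⱼ |R⁻¹ i j| on 𝓡
  set m : Matrix (Fin k) (Fin k) ℝ → ℝ := fun R => ∑ i, ∑ j, |R⁻¹ i j| with hm
  have hinvcont : ∀ R ∈ 𝓡, ContinuousAt (fun B : Matrix (Fin k) (Fin k) ℝ => B⁻¹) R := by
    intro R hR
    apply continuousAt_matrix_inv
    rw [Ring.inverse_eq_inv']
    exact continuousAt_inv₀ (hpd R hR).det_pos.ne'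
  have habs : Continuous (fun B : Matrix (Fin k) (Fin k) ℝ => ∑ i, ∑ j, |B i j|) := by
    apply continuous_finset_sum
    intro i _
    apply continuous_finset_sum
    intro j _
    exact (continuous_id.matrix_elem i j).abs
  have hmcont : ContinuousOn m 𝓡 := fun R hR =>
    ((habs.continuousAt).comp (hinvcont R hR)).continuousWithinAt
  obtain ⟨Rm, hRm, hRmmax'⟩ := hcomp.exists_isMaxOn hne hmcont
  have hRmmax := isMaxOn_iff.mp hRmmax'
  obtain ⟨Rd, hRd, hRdmax'⟩ :=
    hcomp.exists_isMaxOn hne (continuous_id.matrix_det.continuousOn)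
  have hRdmax := isMaxOn_iff.mp hRdmax'
  set D : ℝ := Rd.det with hD
  have hD0 : 0 < D := (hpd Rd hRd).det_pos
  have hm0 : 0 ≤ m Rm :=
    Finset.sum_nonneg fun i _ => Finset.sum_nonneg fun j _ => abs_nonneg _
  set c : ℝ := m Rm + 1 with hc
  have hc0 : 0 < c := by positivity
  have hND : 0 < Real.sqrt ((2 * Real.pi) ^ k * D) := by positivity
  set C : ℝ := (Real.sqrt ((2 * Real.pi) ^ k * D))⁻¹ * Real.exp (-c) with hC
  have hC0 : 0 < C := by positivity
  refine ⟨C, c, hC0, hc0, fun R hR lam y => ?_⟩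
  set s : ℝ := ∑ i, lam i ^ 2 with hs
  have hs0 : 0 ≤ s := Finset.sum_nonneg fun i _ => sq_nonneg _
  have hsq0 : 0 ≤ Real.sqrt s := Real.sqrt_nonneg s
  set T : ℝ := Real.sqrt s + 1 with hT
  have hT0 : 0 < T := by positivity
  have hlam : ∀ i, |lam i| ≤ Real.sqrt s := by
    intro i
    rw [← Real.sqrt_sq_eq_abs]
    exact Real.sqrt_le_sqrt (Finset.single_le_sum (fun j _ => sq_nonneg (lam j))
      (Finset.mem_univ i))
  set J : Fin k → Set ℝ := fun i =>
    if y i then Set.Ioc (-lam i) (-lam i + 1) else Set.Ioc (-lam i - 1) (-lam i) with hJ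
  set Q : Set (Fin k → ℝ) := Set.pi Set.univ J with hQ
  have hQmeas : MeasurableSet Q := by
    apply MeasurableSet.univ_pi
    intro i
    rw [hJ]
    dsimp only
    split <;> exact measurableSet_Ioc
  have hQvol : volume Q = 1 := by
    rw [hQ, volume_pi_pi]
    apply Finset.prod_eq_one
    intro i _
    rw [hJ]
    dsimp only
    split <;> simp [Real.volume_Ioc]
  have hmem : ∀ x ∈ Q, ∀ i, x i + lam i ∈ halfLine (y i) ∧ |x i| ≤ T := by
    intro x hx i
    have hxi : x i ∈ J i := hx i (Set.mem_univ i)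
    have hli := hlam i
    cases hyi : y i with
    | true =>
      simp only [hJ, hyi, if_true] at hxi
      obtain ⟨h1, h2⟩ := hxi
      constructor
      · have hlt : (0 : ℝ) < x i + lam i := by linarith
        simpa [halfLine, hyi] using hlt
      · rw [abs_le]
        rw [abs_le] at hli
        constructor <;> [linarith; linarith]
    | false =>
      simp only [hJ, hyi, Bool.false_eq_true, if_false] at hxi
      obtain ⟨h1, h2⟩ := hxi
      constructor
      · have hlt : x i + lam i ≤ 0 := by linarith
        simpa [halfLine, hyi] using hlt
      · rw [abs_le]
        rw [abs_le] at hli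
        constructor <;> [linarith; linarith]
  -- pointwise lower bound on Q
  have hpoint : ∀ x ∈ Q, C * Real.exp (-c * s) ≤ gaussDensity R x := by
    intro x hx
    have hxT : ∀ i, |x i| ≤ T := fun i => (hmem x hx i).2
    set q : ℝ := x ⬝ᵥ R⁻¹ *ᵥ x with hq
    have hqabs : |q| ≤ m R * T ^ 2 := by
      have hqe : q = ∑ i, x i * ∑ j, R⁻¹ i j * x j := by
        rw [hq]
        simp [dotProduct, Matrix.mulVec]
      rw [hqe]
      calc |∑ i, x i * ∑ j, R⁻¹ i j * x j|
          ≤ ∑ i, |x i * ∑ j, R⁻¹ i j * x j| := Finset.abs_sum_le_sum_abs _ _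
        _ ≤ ∑ i, T * (∑ j, |R⁻¹ i j| * T) := by
            apply Finset.sum_le_sum
            intro i _
            rw [abs_mul]
            have h1 : |∑ j, R⁻¹ i j * x j| ≤ ∑ j, |R⁻¹ i j| * T :=
              (Finset.abs_sum_le_sum_abs _ _).trans (Finset.sum_le_sum fun j _ => by
                rw [abs_mul]
                exact mul_le_mul_of_nonneg_left (hxT j) (abs_nonneg _))
            exact mul_le_mul (hxT i) h1 (abs_nonneg _) hT0.le
        _ = m R * T ^ 2 := by
            have hrr : ∀ i j, T * (|R⁻¹ i j| * T) = |R⁻¹ i j| * T ^ 2 := fun i j => by ring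
            simp_rw [Finset.mul_sum, hrr, ← Finset.sum_mul]
            rfl
    have hmRle : m R ≤ m Rm := hRmmax R hR
    have hmR0 : 0 ≤ m R :=
      Finset.sum_nonneg fun i _ => Finset.sum_nonneg fun j _ => abs_nonneg _
    have hsqs : Real.sqrt s ^ 2 = s := Real.sq_sqrt hs0
    have hhalf : (1 / 2) * q ≤ c * s + c := by
      have h1 : q ≤ m R * T ^ 2 := (le_abs_self q).trans hqabs
      rw [hT] at h1
      nlinarith [sq_nonneg (Real.sqrt s - 1), mul_nonneg hmR0 hs0,
        mul_le_mul_of_nonneg_right hmRle hs0]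
    have hdetR : 0 < R.det := (hpd R hR).det_pos
    have hNR : 0 < Real.sqrt ((2 * Real.pi) ^ k * R.det) := by positivity
    have hdle : R.det ≤ D := hRdmax R hR
    have hA : (Real.sqrt ((2 * Real.pi) ^ k * D))⁻¹ ≤
        (Real.sqrt ((2 * Real.pi) ^ k * R.det))⁻¹ := by
      apply inv_anti₀ hNR
      apply Real.sqrt_le_sqrt
      apply mul_le_mul_of_nonneg_left hdle
      positivity
    have hB : Real.exp (-(c * s + c)) ≤ Real.exp (-(1 / 2) * q) := by
      apply Real.exp_le_exp.mpr
      linarith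
    have heq : C * Real.exp (-c * s) =
        (Real.sqrt ((2 * Real.pi) ^ k * D))⁻¹ * Real.exp (-(c * s + c)) := by
      rw [hC, mul_assoc, ← Real.exp_add]
      ring_nf
    rw [heq]
    unfold gaussDensity
    exact mul_le_mul hA hB (Real.exp_pos _).le (by positivity)
  -- the integrand
  set f : (Fin k → ℝ) → ℝ := fun x =>
    (∏ i, Set.indicator (halfLine (y i)) (fun _ => (1 : ℝ)) (x i + lam i)) *
      gaussDensity R x with hf
  have hgauss_nonneg : ∀ x, 0 ≤ gaussDensity R x := fun x => by
    unfold gaussDensity; positivity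
  have hind01 : ∀ (b : Bool) (t : ℝ),
      Set.indicator (halfLine b) (fun _ => (1 : ℝ)) t ∈ Set.Icc (0 : ℝ) 1 := by
    intro b t
    by_cases h : t ∈ halfLine b <;>
      simp [Set.indicator_of_mem, Set.indicator_of_notMem, h]
  have hf_nonneg : ∀ x, 0 ≤ f x := by
    intro x
    apply mul_nonneg _ (hgauss_nonneg x)
    exact Finset.prod_nonneg fun i _ => (hind01 (y i) _).1
  have hfmeas : AEStronglyMeasurable f volume := by
    have hmf : Measurable f := by
      apply Measurable.mul
      · apply Finset.measurable_prod
        intro i _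
        have hset : MeasurableSet (halfLine (y i)) := by
          unfold halfLine
          split
          · exact measurableSet_Ioi
          · exact measurableSet_Iic
        exact (measurable_const.indicator hset).comp (by fun_prop)
      · exact (gauss_continuous' R).measurable
    exact hmf.aestronglyMeasurable
  have hf_int : Integrable f := by
    refine (gauss_integrable' R (hpd R hR)).mono hfmeas (Filter.Eventually.of_forall fun x => ?_)
    rw [Real.norm_eq_abs, Real.norm_eq_abs, abs_of_nonneg (hf_nonneg x),
      abs_of_nonneg (hgauss_nonneg x)]
    rw [hf]
    calc (∏ i, Set.indicator (halfLine (y i)) (fun _ => (1 : ℝ)) (x i + lam i)) *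
          gaussDensity R x
        ≤ 1 * gaussDensity R x := by
          apply mul_le_mul_of_nonneg_right _ (hgauss_nonneg x)
          exact Finset.prod_le_one (fun i _ => (hind01 (y i) _).1) (fun i _ => (hind01 (y i) _).2)
      _ = gaussDensity R x := one_mul _
  have hEqOn : Set.EqOn f (gaussDensity R) Q := by
    intro x hx
    show (∏ i, Set.indicator (halfLine (y i)) (fun _ => (1 : ℝ)) (x i + lam i)) *
      gaussDensity R x = gaussDensity R x
    have h1 : ∀ i ∈ Finset.univ, Set.indicator (halfLine (y i)) (fun _ => (1 : ℝ))
        (x i + lam i) = 1 := fun i _ => Set.indicator_of_mem (hmem x hx i).1 _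
    rw [Finset.prod_congr rfl h1, Finset.prod_const_one, one_mul]
  calc C * Real.exp (-c * s)
      = (C * Real.exp (-c * s)) * (volume Q).toReal := by rw [hQvol]; simp
    _ ≤ ∫ x in Q, gaussDensity R x :=
        setIntegral_ge_of_const_le_real hQmeas (by rw [hQvol]; exact ENNReal.one_ne_top) hpoint
          (gauss_integrable' R (hpd R hR)).integrableOn
    _ = ∫ x in Q, f x := (setIntegral_congr_fun hQmeas hEqOn).symm
    _ ≤ ∫ x, f x := setIntegral_le_integral hf_int (Filter.Eventually.of_forall hf_nonneg)
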